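/- Suppose K : ℝ → ℝ is continuous with K ≤ 0 pointwise and the operator id + K_J on L²(J) (J a bounded interval) is invertible via a uniformly convergent Neumann series for the resolvent. Then the resolvent kernel satisfies R_J(λ,μ) ≤ K(λ−μ) ≤ 0 for all λ, μ. -/
import Mathlib


open Real MeasureTheory

/-- The iterated kernels of the Neumann series for the resolvent of `id + K_J`. -/
noncomputable def iterK (K : ℝ → ℝ) (J : Set ℝ) : ℕ → ℝ → ℝ → ℝ
  | 0 => fun x y => K (x - y)
  | n + 1 => fun x y => ∫ ν in J, K (x - ν) * iterK K J n ν y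

lemma iterK_sign (K : ℝ → ℝ) (J : Set ℝ) (hKneg : ∀ x, K x ≤ 0) :
    ∀ n x y, (-1 : ℝ) ^ n * iterK K J n x y ≤ 0 := by
  intro n
  induction n with
  | zero => intro x y; simpa [iterK] using hKneg (x - y)
  | succ n ih =>
    intro x y
    have h : (-1 : ℝ) ^ (n + 1) * iterK K J (n + 1) x y
        = ∫ ν in J, (-K (x - ν)) * ((-1 : ℝ) ^ n * iterK K J n ν y) := by
      simp only [iterK]
      rw [← integral_const_mul]
      congr 1
      ext ν
      ring
    rw [h]
    refine integral_nonpos fun ν => ?_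
    exact mul_nonpos_of_nonneg_of_nonpos (by simpa using hKneg (x - ν)) (ih ν y)

/-- If `K ≤ 0` is continuous and the Neumann series for the resolvent kernel of
`id + K_J` (on a bounded interval `J`) converges, then the resolvent kernel satisfies
`R_J(λ, μ) ≤ K(λ - μ) ≤ 0`. This is the regime `-1 < Δ < 0` of the XXZ chain. -/
theorem resolvent_kernel_nonpos (K : ℝ → ℝ) (hK : Continuous K) (hKneg : ∀ x, K x ≤ 0)
    (a b : ℝ) (J : Set ℝ) (hJ : J = Set.Icc a b)
    (R : ℝ → ℝ → ℝ)
    (hR : ∀ x y : ℝ, HasSum (fun n => (-1 : ℝ) ^ n * iterK K J n x y) (R x y)) :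
    ∀ x y : ℝ, R x y ≤ K (x - y) ∧ K (x - y) ≤ 0 := by
  intro x y
  refine ⟨?_, hKneg _⟩
  have hneg := (hR x y).neg
  have h0 : -((-1 : ℝ) ^ 0 * iterK K J 0 x y) ≤ -(R x y) :=
    le_hasSum hneg 0 fun j _ => by simpa using iterK_sign K J hKneg j x y
  simpa [iterK] using neg_le_neg_iff.mp h0
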